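/- For every real h with 0 ≤ h ≤ a (a the real root of a^3 + 2a^2 + 3a - 2 = 0), one has S·(N₁ h)^2 ≤ a(1+a) < 1, where S = 2(1+h)/(h^2+2h+3) and N₁ = (h^2+2h+3)/2; equivalently, h^2 (h^2+2h+3)(1+h)/2 ≤ a(1+a). -/

import Mathlib

theorem S_N1h_sq_le (a : ℝ) (ha : a ^ 3 + 2 * a ^ 2 + 3 * a - 2 = 0)
    (ha1 : (0.477 : ℝ) < a) (ha2 : a < 0.478)
    (h : ℝ) (hh0 : 0 ≤ h) (hha : h ≤ a) :
    2 * (1 + h) / (h ^ 2 + 2 * h + 3) * ((h ^ 2 + 2 * h + 3) / 2 * h) ^ 2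
        ≤ a * (1 + a) ∧
      a * (1 + a) < 1 := by
  have hD : (0:ℝ) < h ^ 2 + 2 * h + 3 := by nlinarith
  constructor
  · have key : 2 * (1 + h) / (h ^ 2 + 2 * h + 3) * ((h ^ 2 + 2 * h + 3) / 2 * h) ^ 2
        = (1 + h) * (h ^ 2 + 2 * h + 3) * h ^ 2 / 2 := by
      field_simp
    rw [key]
    have h2 : h ^ 2 ≤ a ^ 2 := pow_le_pow_left₀ hh0 hha 2
    have h3 : h ^ 3 ≤ a ^ 3 := pow_le_pow_left₀ hh0 hha 3
    have h4 : h ^ 4 ≤ a ^ 4 := pow_le_pow_left₀ hh0 hha 4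
    have h5 : h ^ 5 ≤ a ^ 5 := pow_le_pow_left₀ hh0 hha 5
    nlinarith [h2, h3, h4, h5, ha]
  · nlinarith
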